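/- Let K be a finite field and X = [K_0 × ... × K_n] ⊂ P^n a projective nested Cartesian set with |K_i| = d_i, K_i ⊆ K. Then the number of points of X equals 1 + Σ_{i=1}^{n} d_i d_{i+1} ⋯ d_n. -/

import Mathlib

open Finset
open scoped LinearAlgebra.Projectivization

theorem stmt_10 (K : Type*) [Field K] [Fintype K] (n : ℕ)
    (A : Fin (n + 1) → Subfield K)
    (hnested : ∀ i j : Fin (n + 1), i ≤ j → A i ≤ A j)
    (d : ℕ → ℕ) (hd : ∀ i : Fin (n + 1), Nat.card (A i) = d (i : ℕ)) :
    Set.ncard {p : ℙ K (Fin (n + 1) → K) |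
        ∃ (v : Fin (n + 1) → K) (hv : v ≠ 0),
          (∀ i, v i ∈ A i) ∧ p = Projectivization.mk K v hv} =
      1 + ∑ i ∈ Icc 1 n, ∏ j ∈ Icc i n, d j := by
  classical
  -- the set of canonical representatives
  set C : Set (Fin (n + 1) → K) :=
    {v | (∀ i, v i ∈ A i) ∧ ∃ k, v k = 1 ∧ ∀ j, j < k → v j = 0} with hC
  have hCne : ∀ v ∈ C, v ≠ 0 := by
    rintro v ⟨-, k, hk1, -⟩ h0
    rw [h0] at hk1
    simp at hk1
  -- uniqueness of the canonical index
  have huniq : ∀ v ∈ C, ∀ k k' : Fin (n + 1),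
      (v k = 1 ∧ ∀ j, j < k → v j = 0) → (v k' = 1 ∧ ∀ j, j < k' → v j = 0) → k = k' := by
    rintro v - k k' ⟨hk1, hk0⟩ ⟨hk1', hk0'⟩
    rcases lt_trichotomy k k' with h | h | h
    · exact absurd (hk0' k h) (by rw [hk1]; exact one_ne_zero)
    · exact h
    · exact absurd (hk0 k' h) (by rw [hk1']; exact one_ne_zero)
  -- the map to projective space
  set f : (Fin (n + 1) → K) → ℙ K (Fin (n + 1) → K) := fun v =>
    if h : v ≠ 0 then Projectivization.mk K v h
    else Projectivization.mk K (fun _ => 1) (by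
      intro h0; have := congrFun h0 0; simp at this) with hf
  have hfC : ∀ v (h : v ≠ 0), f v = Projectivization.mk K v h := by
    intro v h; simp [hf, h]
  -- the set in question is the image of C
  have himg : {p : ℙ K (Fin (n + 1) → K) |
      ∃ (v : Fin (n + 1) → K) (hv : v ≠ 0),
        (∀ i, v i ∈ A i) ∧ p = Projectivization.mk K v hv} = f '' C := by
    ext p
    constructor
    · rintro ⟨v, hv, hA, rfl⟩
      -- normalize by the first nonzero coordinate
      have hsne : (univ.filter (fun j => v j ≠ 0)).Nonempty := by
        rcases Function.ne_iff.mp hv with ⟨j, hj⟩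
        exact ⟨j, Finset.mem_filter.mpr ⟨mem_univ j, by simpa using hj⟩⟩
      set k := (univ.filter (fun j => v j ≠ 0)).min' hsne with hkdef
      have hkmem : v k ≠ 0 := by
        have := Finset.min'_mem _ hsne
        simpa using this
      have hkmin : ∀ j, j < k → v j = 0 := by
        intro j hj
        by_contra hj0
        exact absurd (Finset.min'_le _ j (by simp [hj0])) (not_le.mpr hj)
      have hw0 : (v k)⁻¹ • v ≠ 0 := by
        intro h0
        have := congrFun h0 k
        simp [inv_mul_cancel₀ hkmem] at this
      refine ⟨(v k)⁻¹ • v, ⟨?_, k, ?_, ?_⟩, ?_⟩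
      · intro i
        rcases lt_or_ge i k with h | h
        · simp [hkmin i h, zero_mem]
        · have hvk : v k ∈ A i := hnested k i h (hA k)
          simp only [Pi.smul_apply, smul_eq_mul]
          exact mul_mem (Subfield.inv_mem _ hvk) (hA i)
      · simp [inv_mul_cancel₀ hkmem]
      · intro j hj; simp [hkmin j hj]
      · rw [hfC _ hw0, Projectivization.mk_eq_mk_iff]
        refine ⟨Units.mk0 ((v k)⁻¹) (inv_ne_zero hkmem), ?_⟩
        funext j
        simp [Units.smul_def]
    · rintro ⟨v, hvC, rfl⟩
      exact ⟨v, hCne v hvC, hvC.1, hfC v (hCne v hvC)⟩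
  -- f is injective on C
  have hinj : Set.InjOn f C := by
    intro v hv w hw hvw
    rw [hfC v (hCne v hv), hfC w (hCne w hw), Projectivization.mk_eq_mk_iff] at hvw
    obtain ⟨a, ha⟩ := hvw
    obtain ⟨hvA, k, hk1, hk0⟩ := hv
    obtain ⟨hwA, k', hk1', hk0'⟩ := hw
    have hsm : ∀ j, (a : K) * w j = v j := by
      intro j; rw [← ha]; simp [Units.smul_def]
    have hkk' : k = k' := by
      rcases lt_trichotomy k k' with h | h | h
      · have := hsm k
        rw [hk0' k h, hk1, mul_zero] at this
        exact absurd this.symm one_ne_zero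
      · exact h
      · have := hsm k'
        rw [hk1', hk0 k' h, mul_one] at this
        exact absurd this a.ne_zero
    have ha1 : (a : K) = 1 := by
      have := hsm k
      rwa [hkk', hk1', mul_one, ← hkk', hk1] at this
    funext j
    rw [← hsm j, ha1, one_mul]
  have hcard1 : Set.ncard {p : ℙ K (Fin (n + 1) → K) |
      ∃ (v : Fin (n + 1) → K) (hv : v ≠ 0),
        (∀ i, v i ∈ A i) ∧ p = Projectivization.mk K v hv} = C.ncard := by
    rw [himg, Set.ncard_image_of_injOn hinj]
  rw [hcard1]
  -- now count C via a finset
  set Ck : Fin (n + 1) → Finset (Fin (n + 1) → K) := fun k =>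
    Fintype.piFinset (fun j => if j < k then {0} else if j = k then {1}
      else ((A j : Set K).toFinset)) with hCk
  have hCkmem : ∀ k v, v ∈ Ck k ↔
      (∀ j, j < k → v j = 0) ∧ v k = 1 ∧ ∀ j, k < j → v j ∈ A j := by
    intro k v
    rw [hCk]
    simp only [Fintype.mem_piFinset]
    constructor
    · intro h
      refine ⟨fun j hj => by have := h j; simpa [hj] using this,
        by have := h k; simpa using this, fun j hj => ?_⟩
      have := h j
      simp [not_lt_of_gt hj, (ne_of_gt hj)] at this
      simpa using this
    · rintro ⟨h0, h1, hA'⟩ j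
      rcases lt_trichotomy j k with h | h | h
      · simp [h, h0 j h]
      · subst h; simp [h1]
      · simp [not_lt_of_gt h, ne_of_gt h, hA' j h]
  set T : Finset (Fin (n + 1) → K) := univ.biUnion Ck with hT
  have hCT : C = ↑T := by
    ext v
    simp only [hT, Finset.coe_biUnion, Set.mem_iUnion, Finset.mem_coe, mem_univ,
      Set.mem_setOf_eq, hC, Finset.coe_univ, Set.mem_univ, Set.iUnion_true]
    constructor
    · rintro ⟨hA', k, hk1, hk0⟩
      exact ⟨k, (hCkmem k v).mpr ⟨hk0, hk1, fun j _ => hA' j⟩⟩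
    · rintro ⟨k, hk⟩
      rw [hCkmem] at hk
      obtain ⟨h0, h1, hA'⟩ := hk
      refine ⟨fun i => ?_, k, h1, h0⟩
      rcases lt_trichotomy i k with h | h | h
      · rw [h0 i h]; exact zero_mem _
      · subst h; rw [h1]; exact one_mem _
      · exact hA' i h
  rw [hCT, Set.ncard_coe_finset]
  -- disjointness
  have hdisj : ∀ k ∈ univ, ∀ k' ∈ univ, k ≠ k' →
      Disjoint (Ck k) (Ck k') := by
    intro k _ k' _ hne
    rw [Finset.disjoint_left]
    intro v hv hv'
    rw [hCkmem] at hv hv'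
    rcases hne.lt_or_gt with h | h
    · rw [hv'.1 k h] at hv; exact one_ne_zero hv.2.1.symm
    · rw [hv.1 k' h] at hv'; exact one_ne_zero hv'.2.1.symm
  have hTcard : T.card = ∑ k : Fin (n + 1), ∏ j ∈ Ioi k, d (j : ℕ) := by
    rw [hT, Finset.card_biUnion hdisj]
    refine Finset.sum_congr rfl fun k _ => ?_
    rw [hCk]
    rw [Fintype.card_piFinset]
    rw [← Finset.prod_subset (Finset.subset_univ (Ioi k))]
    · refine Finset.prod_congr rfl fun j hj => ?_
      rw [Finset.mem_Ioi] at hj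
      rw [if_neg (not_lt_of_gt hj), if_neg (ne_of_gt hj)]
      rw [Set.toFinset_card, ← Nat.card_eq_fintype_card]
      rw [← hd j]
      congr 1
    · intro j _ hj
      rw [Finset.mem_Ioi, not_lt] at hj
      rcases lt_or_eq_of_le hj with h | h
      · rw [if_pos h]; simp
      · subst h; rw [if_neg (lt_irrefl _), if_pos rfl]; simp
  rw [hTcard]
  -- arithmetic
  have hIoi : ∀ k : Fin (n + 1), ∏ j ∈ Ioi k, d (j : ℕ) = ∏ j ∈ Ioc (k : ℕ) n, d j := by
    intro k
    have hmap : (Ioi k).map Fin.valEmbedding = Ioc (k : ℕ) n := by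
      rw [Fin.map_valEmbedding_Ioi]; ext x; simp only [Finset.mem_Ioo, Finset.mem_Ioc]; omega
    rw [← hmap, Finset.prod_map]
    rfl
  simp_rw [hIoi]
  rw [Fin.sum_univ_eq_sum_range (fun k => ∏ j ∈ Ioc k n, d j)]
  rw [Finset.sum_range_succ]
  rw [show Ioc n n = (∅ : Finset ℕ) by simp, Finset.prod_empty]
  rw [show Icc 1 n = Ico 1 (n + 1) by rw [Finset.Ico_add_one_right_eq_Icc]]
  rw [Finset.sum_Ico_eq_sum_range]
  simp only [Nat.add_sub_cancel]
  rw [add_comm]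
  congr 1
  refine Finset.sum_congr rfl fun k hk => ?_
  rw [add_comm 1 k, Finset.Icc_add_one_left_eq_Ioc]
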